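/- There exists a universal constant C > 0 such that for every n ≥ 1 and every linear threshold function f : {−1,1}^n → {−1,1} (i.e., f(x) = sign(w₀ + Σ_{i=1}^n w_i x_i) for some reals w₀, …, w_n), there exists a set S ⊆ {1,…,n} with f̂(S)² ≥ 2^{−C·Inf(f)}. Equivalently, the Fourier min-entropy min_S log₂(1/f̂(S)²) of any linear threshold function is at most C·Inf(f). -/
import Mathlib


open Finset Real MeasureTheory ProbabilityTheory
open scoped Classical

/-- sign: maps z to 1 if z > 0 and to −1 if z ≤ 0. -/
noncomputable def sgn (z : ℝ) : ℝ := if 0 < z then 1 else -1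

/-- interpret a Bool as ±1. -/
def pm (b : Bool) : ℝ := if b then 1 else -1

/-- probability of an event under the uniform distribution on {−1,1}^n. -/
noncomputable def unifPr (n : ℕ) (E : (Fin n → Bool) → Prop) : ℝ :=
  ((Finset.univ : Finset (Fin n → Bool)).filter E).card / 2 ^ n

/-- expectation under the uniform distribution on {−1,1}^n. -/
noncomputable def unifExp (n : ℕ) (g : (Fin n → Bool) → ℝ) : ℝ :=
  (∑ x : Fin n → Bool, g x) / 2 ^ n

/-- flip the i-th coordinate. -/
def flipAt {n : ℕ} (i : Fin n) (x : Fin n → Bool) : Fin n → Bool :=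
  Function.update x i (!(x i))

/-- influence of coordinate i. -/
noncomputable def infl {n : ℕ} (f : (Fin n → Bool) → ℝ) (i : Fin n) : ℝ :=
  unifPr n (fun x => f x ≠ f (flipAt i x))

/-- total influence. -/
noncomputable def totalInfl {n : ℕ} (f : (Fin n → Bool) → ℝ) : ℝ :=
  ∑ i, infl f i

/-- Fourier coefficient f̂(S). -/
noncomputable def fCoeff {n : ℕ} (f : (Fin n → Bool) → ℝ) (S : Finset (Fin n)) : ℝ :=
  unifExp n (fun x => f x * ∏ i ∈ S, pm (x i))

/-- Fourier entropy with log base 2 (0 · log(1/0) is 0 by convention, which holds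
definitionally since `Real.log 0 = 0` in Mathlib). -/
noncomputable def fourierEntropy {n : ℕ} (f : (Fin n → Bool) → ℝ) : ℝ :=
  ∑ S : Finset (Fin n), (fCoeff f S) ^ 2 * Real.logb 2 (1 / (fCoeff f S) ^ 2)

/-- The linear threshold function with weights w₀, w₁, …, w_n. -/
noncomputable def ltf (n : ℕ) (w : Fin (n + 1) → ℝ) : (Fin n → Bool) → ℝ :=
  fun x => sgn (w 0 + ∑ i : Fin n, w i.succ * pm (x i))

-- basics
lemma pm_not (b : Bool) : pm (!b) = -pm b := by cases b <;> simp [pm]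
lemma pm_sq (b : Bool) : pm b * pm b = 1 := by cases b <;> simp [pm]
lemma abs_pm (b : Bool) : |pm b| = 1 := by cases b <;> simp [pm]
lemma sgn_mul_self (z : ℝ) : sgn z * z = |z| := by
  by_cases h : 0 < z
  · simp [sgn, h, abs_of_pos h]
  · simp [sgn, h, abs_of_nonpos (le_of_not_gt h)]
lemma sgn_eq (z : ℝ) : sgn z = 1 ∨ sgn z = -1 := by
  by_cases h : 0 < z <;> simp [sgn, h]

lemma flipAt_invol {n : ℕ} (i : Fin n) (x : Fin n → Bool) : flipAt i (flipAt i x) = x := by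
  simp [flipAt, Function.update_idem, Function.update_self, Function.update_eq_self]

lemma sum_flip {n : ℕ} (i : Fin n) (g : (Fin n → Bool) → ℝ) :
    ∑ x : Fin n → Bool, g (flipAt i x) = ∑ x : Fin n → Bool, g x :=
  Fintype.sum_bijective (flipAt i) (Function.Involutive.bijective (flipAt_invol i)) _ _ (fun x => rfl)

noncomputable def ind (p : Prop) : ℝ := if p then 1 else 0

lemma ind_nonneg (p : Prop) : 0 ≤ ind p := by
  unfold ind; split <;> norm_num

lemma ind_of {p : Prop} (h : p) : ind p = 1 := by simp [ind, h]
lemma ind_of_not {p : Prop} (h : ¬ p) : ind p = 0 := by simp [ind, h]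

lemma unifPr_eq_sum (n : ℕ) (E : (Fin n → Bool) → Prop) :
    unifPr n E = (∑ x : Fin n → Bool, ind (E x)) / 2 ^ n := by
  unfold unifPr
  congr 1
  rw [← Finset.sum_boole]
  exact Finset.sum_congr rfl fun x _ => by
    by_cases h : E x
    · rw [ind_of h, if_pos h]
    · rw [ind_of_not h, if_neg h]

lemma unifPr_nonneg (n : ℕ) (E) : 0 ≤ unifPr n E := by
  unfold unifPr; positivity

lemma unifPr_le_one (n : ℕ) (E) : unifPr n E ≤ 1 := by
  rw [unifPr, div_le_one (by positivity)]
  calc ((Finset.univ.filter E).card : ℝ) ≤ (Finset.univ : Finset (Fin n → Bool)).card := by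
        exact_mod_cast Finset.card_le_card (Finset.filter_subset _ _)
    _ = 2 ^ n := by simp [Finset.card_univ]

lemma infl_nonneg {n : ℕ} (f : (Fin n → Bool) → ℝ) (i) : 0 ≤ infl f i := unifPr_nonneg _ _
lemma totalInfl_nonneg {n : ℕ} (f : (Fin n → Bool) → ℝ) : 0 ≤ totalInfl f :=
  Finset.sum_nonneg fun i _ => infl_nonneg f i

lemma sum_cube_succ {n : ℕ} (g : (Fin (n+1) → Bool) → ℝ) :
    ∑ x : Fin (n+1) → Bool, g x
      = ∑ y : Fin n → Bool, (g (Fin.cons true y) + g (Fin.cons false y)) := by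
  rw [← (Fin.consEquiv (fun _ : Fin (n+1) => Bool)).sum_comp g]
  rw [Fintype.sum_prod_type_right]
  exact Finset.sum_congr rfl fun y _ => by rw [Fintype.sum_bool]; rfl

lemma flipAt_zero_cons {n : ℕ} (b : Bool) (y : Fin n → Bool) :
    flipAt 0 (Fin.cons b y) = Fin.cons (!b) y := by
  funext j
  refine Fin.cases ?_ (fun k => ?_) j
  · simp [flipAt]
  · simp [flipAt, Function.update, Fin.succ_ne_zero]

lemma flipAt_succ_cons {n : ℕ} (i : Fin n) (b : Bool) (y : Fin n → Bool) :
    flipAt i.succ (Fin.cons b y) = Fin.cons b (flipAt i y) := by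
  funext j
  refine Fin.cases ?_ (fun k => ?_) j
  · simp [flipAt, Function.update, (Fin.succ_ne_zero i).symm]
  · by_cases h : k = i
    · subst h; simp [flipAt]
    · simp [flipAt, Function.update, h, fun hh => h (Fin.succ_injective _ hh)]


lemma unifExp_succ {n : ℕ} (f : (Fin (n+1) → Bool) → ℝ) :
    unifExp (n+1) f
      = (unifExp n (fun y => f (Fin.cons true y)) + unifExp n (fun y => f (Fin.cons false y))) / 2 := by
  unfold unifExp
  rw [sum_cube_succ, Finset.sum_add_distrib, pow_succ]
  ring

lemma infl_zero {n : ℕ} (f : (Fin (n+1) → Bool) → ℝ) :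
    infl f 0 = unifPr n (fun y => f (Fin.cons true y) ≠ f (Fin.cons false y)) := by
  unfold infl
  simp only [unifPr_eq_sum]
  rw [sum_cube_succ]
  have h1 : ∀ y : Fin n → Bool,
      (ind (f (Fin.cons true y) ≠ f (flipAt 0 (Fin.cons true y)))
        + ind (f (Fin.cons false y) ≠ f (flipAt 0 (Fin.cons false y))))
      = 2 * ind (f (Fin.cons true y) ≠ f (Fin.cons false y)) := by
    intro y
    rw [flipAt_zero_cons, flipAt_zero_cons]
    simp only [Bool.not_true, Bool.not_false]
    by_cases h : f (Fin.cons true y) = f (Fin.cons false y)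
    · simp [ind_of_not, h, fun hh : ¬ (f (Fin.cons false y) = f (Fin.cons true y)) => hh h.symm]
    · rw [ind_of h, ind_of (Ne.symm h)]
      norm_num
  have h2 : (∑ y : Fin n → Bool,
      (ind (f (Fin.cons true y) ≠ f (flipAt 0 (Fin.cons true y)))
        + ind (f (Fin.cons false y) ≠ f (flipAt 0 (Fin.cons false y)))))
      = 2 * ∑ y : Fin n → Bool, ind (f (Fin.cons true y) ≠ f (Fin.cons false y)) := by
    rw [Finset.mul_sum]
    exact Finset.sum_congr rfl fun y _ => h1 y
  rw [h2, pow_succ]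
  ring

lemma infl_succ {n : ℕ} (f : (Fin (n+1) → Bool) → ℝ) (i : Fin n) :
    infl f i.succ
      = (infl (fun y => f (Fin.cons true y)) i + infl (fun y => f (Fin.cons false y)) i) / 2 := by
  unfold infl
  simp only [unifPr_eq_sum]
  rw [sum_cube_succ]
  have h2 : (∑ y : Fin n → Bool,
      (ind (f (Fin.cons true y) ≠ f (flipAt i.succ (Fin.cons true y)))
        + ind (f (Fin.cons false y) ≠ f (flipAt i.succ (Fin.cons false y)))))
      = (∑ y : Fin n → Bool, ind (f (Fin.cons true y) ≠ f (Fin.cons true (flipAt i y))))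
        + ∑ y : Fin n → Bool, ind (f (Fin.cons false y) ≠ f (Fin.cons false (flipAt i y))) := by
    rw [← Finset.sum_add_distrib]
    exact Finset.sum_congr rfl fun y _ => by rw [flipAt_succ_cons, flipAt_succ_cons]
  rw [h2, pow_succ]
  ring

lemma totalInfl_succ {n : ℕ} (f : (Fin (n+1) → Bool) → ℝ) :
    totalInfl f = infl f 0 + ∑ i : Fin n, infl f i.succ := by
  unfold totalInfl
  exact Fin.sum_univ_succ _

-- Poincaré inequality
lemma poincare : ∀ {n : ℕ} (f : (Fin n → Bool) → ℝ), (∀ x, f x = 1 ∨ f x = -1) →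
    1 - (unifExp n f)^2 ≤ totalInfl f := by
  intro n
  induction n with
  | zero =>
    intro f hf
    have h1 : unifExp 0 f = f (fun i => i.elim0) := by
      unfold unifExp
      rw [Fintype.sum_subsingleton _ (fun i => i.elim0)]
      simp
    have h2 : (f (fun i => i.elim0))^2 = 1 := by
      rcases hf (fun i => i.elim0) with h | h <;> rw [h] <;> norm_num
    rw [h1, h2]
    simpa using totalInfl_nonneg f
  | succ n ih =>
    intro f hf
    have hgt1 : ∀ y, (fun y => f (Fin.cons true y)) y = 1 ∨ (fun y => f (Fin.cons true y)) y = -1 :=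
      fun y => hf _
    have hgf1 : ∀ y, (fun y => f (Fin.cons false y)) y = 1 ∨ (fun y => f (Fin.cons false y)) y = -1 :=
      fun y => hf _
    have iht := ih _ hgt1
    have ihf := ih _ hgf1
    set gt : (Fin n → Bool) → ℝ := fun y => f (Fin.cons true y) with hgt
    set gf : (Fin n → Bool) → ℝ := fun y => f (Fin.cons false y) with hgf
    set μt := unifExp n gt
    set μf := unifExp n gf
    set P := unifPr n (fun y => gt y ≠ gf y) with hP
    have hPsum : P = (∑ y : Fin n → Bool, ind (gt y ≠ gf y)) / 2^n := by
      simp only [hP, unifPr_eq_sum]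
    have hP1 : P ≤ 1 := unifPr_le_one _ _
    have hP0 : 0 ≤ P := unifPr_nonneg _ _
    have h2n : (0:ℝ) < 2^n := by positivity
    have hdiff : (μt - μf)^2 ≤ 4 * P := by
      have hsum : μt - μf = (∑ y : Fin n → Bool, (gt y - gf y)) / 2^n := by
        show unifExp n gt - unifExp n gf = _
        unfold unifExp
        rw [Finset.sum_sub_distrib]
        ring
      have hpt : ∀ y, |gt y - gf y| ≤ 2 * (ind (gt y ≠ gf y)) := by
        intro y
        by_cases h : gt y = gf y
        · simp [h, ind_of_not]
        · rw [ind_of h]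
          rcases hgt1 y with h1 | h1 <;> rcases hgf1 y with h2 | h2 <;>
            rw [h1, h2] <;> norm_num
      have habs : |∑ y : Fin n → Bool, (gt y - gf y)|
          ≤ 2 * (∑ y : Fin n → Bool, ind (gt y ≠ gf y)) := by
        calc |∑ y : Fin n → Bool, (gt y - gf y)| ≤ ∑ y : Fin n → Bool, |gt y - gf y| :=
              Finset.abs_sum_le_sum_abs _ _
          _ ≤ ∑ y : Fin n → Bool, 2 * (ind (gt y ≠ gf y)) :=
              Finset.sum_le_sum fun y _ => hpt y
          _ = _ := by rw [Finset.mul_sum]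
      have habs' : |μt - μf| ≤ 2 * P := by
        rw [hsum, hPsum, abs_div, abs_of_pos h2n, ← mul_div_assoc]
        gcongr
      calc (μt - μf)^2 = |μt - μf|^2 := (sq_abs _).symm
        _ ≤ (2*P)^2 := by
            apply pow_le_pow_left₀ (abs_nonneg _) habs'
        _ = 4*P*P := by ring
        _ ≤ 4*P*1 := mul_le_mul_of_nonneg_left hP1 (by linarith)
        _ = 4*P := by ring
    have hE : unifExp (n+1) f = (μt + μf)/2 := unifExp_succ f
    have hT : totalInfl f = P + (totalInfl gt + totalInfl gf)/2 := by
      rw [totalInfl_succ]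
      congr 1
      · rw [infl_zero]
      · calc ∑ i : Fin n, infl f i.succ
            = ∑ i : Fin n, (infl gt i + infl gf i)/2 :=
              Finset.sum_congr rfl (fun i _ => infl_succ f i)
          _ = (totalInfl gt + totalInfl gf)/2 := by
              rw [← Finset.sum_div, Finset.sum_add_distrib]
              rfl
    rw [hE, hT]
    nlinarith [hdiff, iht, ihf]

-- |f̂({i})| ≤ Inf_i
lemma abs_fCoeff_le_infl {n : ℕ} (f : (Fin n → Bool) → ℝ) (hf : ∀ x, f x = 1 ∨ f x = -1)
    (i : Fin n) : |fCoeff f {i}| ≤ infl f i := by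
  have h2n : (0:ℝ) < 2^n := by positivity
  have hv : fCoeff f {i} = (∑ x : Fin n → Bool, f x * pm (x i)) / 2^n := by
    simp [fCoeff, unifExp]
  have hinf : infl f i = (∑ x : Fin n → Bool, ind (f x ≠ f (flipAt i x))) / 2^n := by
    rw [infl, unifPr_eq_sum]
  have hflip : ∑ x : Fin n → Bool, f x * pm (x i)
      = ∑ x : Fin n → Bool, -(f (flipAt i x) * pm (x i)) := by
    rw [← sum_flip i (fun x => f x * pm (x i))]
    refine Finset.sum_congr rfl fun x _ => ?_
    have : (flipAt i x) i = !(x i) := Function.update_self i _ x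
    rw [this, pm_not]
    ring
  have key : 2 * ∑ x : Fin n → Bool, f x * pm (x i)
      = ∑ x : Fin n → Bool, (f x - f (flipAt i x)) * pm (x i) := by
    rw [two_mul]
    nth_rewrite 2 [hflip]
    rw [← Finset.sum_add_distrib]
    exact Finset.sum_congr rfl fun x _ => by ring
  have habs : |∑ x : Fin n → Bool, f x * pm (x i)|
      ≤ ∑ x : Fin n → Bool, ind (f x ≠ f (flipAt i x)) := by
    have h1 : |2 * ∑ x : Fin n → Bool, f x * pm (x i)|
        ≤ ∑ x : Fin n → Bool, 2 * ind (f x ≠ f (flipAt i x)) := by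
      rw [key]
      calc |∑ x : Fin n → Bool, (f x - f (flipAt i x)) * pm (x i)|
          ≤ ∑ x : Fin n → Bool, |(f x - f (flipAt i x)) * pm (x i)| :=
            Finset.abs_sum_le_sum_abs _ _
        _ ≤ ∑ x : Fin n → Bool, 2 * ind (f x ≠ f (flipAt i x)) := by
            refine Finset.sum_le_sum fun x _ => ?_
            rw [abs_mul, abs_pm, mul_one]
            by_cases h : f x = f (flipAt i x)
            · simp [h, ind_of_not]
            · rw [ind_of h]
              rcases hf x with h1 | h1 <;> rcases hf (flipAt i x) with h2 | h2 <;>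
                rw [h1, h2] <;> norm_num
    rw [abs_mul, abs_two, ← Finset.mul_sum] at h1
    linarith [abs_nonneg (∑ x : Fin n → Bool, f x * pm (x i))]
  rw [hv, hinf, abs_div, abs_of_pos h2n]
  gcongr

-- second moment
lemma momA : ∀ {n : ℕ} (c : ℝ) (a : Fin n → ℝ),
    ∑ x : Fin n → Bool, (c + ∑ i, a i * pm (x i))^2 = 2^n * (c^2 + ∑ i, (a i)^2) := by
  intro n
  induction n with
  | zero => intro c a; simp
  | succ n ih =>
    intro c a
    rw [sum_cube_succ]
    beta_reduce
    have hL : ∀ (b : Bool) (y : Fin n → Bool),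
        (∑ i : Fin (n+1), a i * pm ((Fin.cons b y : Fin (n+1) → Bool) i))
          = a 0 * pm b + ∑ i : Fin n, a i.succ * pm (y i) := by
      intro b y
      rw [Fin.sum_univ_succ]
      simp
    have h1 : ∀ y : Fin n → Bool,
        (c + ∑ i : Fin (n+1), a i * pm ((Fin.cons true y : Fin (n+1) → Bool) i))^2
          + (c + ∑ i : Fin (n+1), a i * pm ((Fin.cons false y : Fin (n+1) → Bool) i))^2
        = 2 * (c + ∑ i : Fin n, a i.succ * pm (y i))^2 + 2 * (a 0)^2 := by
      intro y
      rw [hL, hL]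
      simp only [pm]
      norm_num
      ring
    rw [Finset.sum_congr rfl fun y _ => h1 y, Finset.sum_add_distrib, ← Finset.mul_sum,
      ih c (fun i => a i.succ), Finset.sum_const, Finset.card_univ]
    simp only [Fintype.card_fun, Fintype.card_fin, Fintype.card_bool, nsmul_eq_mul]
    rw [Fin.sum_univ_succ, pow_succ]
    push_cast
    ring

-- fourth moment
lemma momB : ∀ {n : ℕ} (c : ℝ) (a : Fin n → ℝ),
    ∑ x : Fin n → Bool, (c + ∑ i, a i * pm (x i))^4 ≤ 3 * 2^n * (c^2 + ∑ i, (a i)^2)^2 := by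
  intro n
  induction n with
  | zero => intro c a; simp; nlinarith [sq_nonneg c, sq_nonneg (c^2)]
  | succ n ih =>
    intro c a
    rw [sum_cube_succ]
    beta_reduce
    have hL : ∀ (b : Bool) (y : Fin n → Bool),
        (∑ i : Fin (n+1), a i * pm ((Fin.cons b y : Fin (n+1) → Bool) i))
          = a 0 * pm b + ∑ i : Fin n, a i.succ * pm (y i) := by
      intro b y
      rw [Fin.sum_univ_succ]
      simp
    have h1 : ∀ y : Fin n → Bool,
        (c + ∑ i : Fin (n+1), a i * pm ((Fin.cons true y : Fin (n+1) → Bool) i))^4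
          + (c + ∑ i : Fin (n+1), a i * pm ((Fin.cons false y : Fin (n+1) → Bool) i))^4
        = 2 * (c + ∑ i : Fin n, a i.succ * pm (y i))^4
          + 12 * (a 0)^2 * (c + ∑ i : Fin n, a i.succ * pm (y i))^2 + 2 * (a 0)^4 := by
      intro y
      rw [hL, hL]
      simp only [pm]
      norm_num
      ring
    rw [Finset.sum_congr rfl fun y _ => h1 y, Finset.sum_add_distrib, Finset.sum_add_distrib,
      ← Finset.mul_sum, ← Finset.mul_sum, momA c (fun i => a i.succ), Finset.sum_const,
      Finset.card_univ]
    simp only [Fintype.card_fun, Fintype.card_fin, Fintype.card_bool, nsmul_eq_mul]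
    rw [Fin.sum_univ_succ]
    push_cast
    rw [show ((2:ℝ))^(n+1) = 2^n * 2 by ring]
    have ihs := ih c (fun i => a i.succ)
    have h2n : (0:ℝ) < 2^n := by positivity
    nlinarith [ihs, h2n, sq_nonneg (a 0), sq_nonneg (a 0 ^ 2),
      mul_nonneg (le_of_lt h2n) (sq_nonneg ((a 0)^2))]


lemma third_from_ineqs (A1 A2 A3 A4 N T W : ℝ)
    (hA1nn : 0 ≤ A1) (hA3nn : 0 ≤ A3) (hA4nn : 0 ≤ A4)
    (hNpos : 0 < N) (hTpos : 0 < T) (hWnn : 0 ≤ W)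
    (hA2eq : A2 = N * T)
    (cs1 : A2^2 ≤ A1 * A3) (cs2 : A3^2 ≤ A2 * A4)
    (hA1sq : A1^2 ≤ N^2 * T * W) (hA4 : A4 ≤ 3 * N * T^2) :
    1/3 ≤ W := by
  have hA2pos : 0 < A2 := by rw [hA2eq]; positivity
  have e1 : A2^4 ≤ A1^2 * A3^2 := by nlinarith [cs1, sq_nonneg A2, mul_nonneg hA1nn hA3nn]
  have e3 : A2^4 ≤ A1^2 * (A2 * A4) :=
    le_trans e1 (mul_le_mul_of_nonneg_left cs2 (sq_nonneg A1))
  have chain : A2^3 ≤ A1^2 * A4 := by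
    have h4 : A2^3 * A2 ≤ (A1^2 * A4) * A2 := by nlinarith [e3]
    exact le_of_mul_le_mul_right h4 hA2pos
  have e5 : A1^2 * A4 ≤ (N^2 * T * W) * (3 * N * T^2) := by
    apply mul_le_mul hA1sq hA4 hA4nn
    positivity
  have e6 : A2^3 ≤ 3 * A2^3 * W := by
    calc A2^3 ≤ (N^2 * T * W) * (3 * N * T^2) := le_trans chain e5
      _ = 3 * (N*T)^3 * W := by ring
      _ = 3 * A2^3 * W := by rw [hA2eq]
  nlinarith [e6, pow_pos hA2pos 3]

-- W ≥ 1/3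
lemma W_ge_third (n : ℕ) (w : Fin (n+1) → ℝ) :
    (1:ℝ)/3 ≤ (fCoeff (ltf n w) ∅)^2 + ∑ i : Fin n, (fCoeff (ltf n w) {i})^2 := by
  set f := ltf n w with hfdef
  set c := w 0 with hc
  set a : Fin n → ℝ := fun i => w i.succ with ha
  set L : (Fin n → Bool) → ℝ := fun x => c + ∑ i, a i * pm (x i) with hLdef
  set N : ℝ := 2^n with hN
  have hNpos : (0:ℝ) < N := by rw [hN]; positivity
  have hfL : ∀ x, f x = sgn (L x) := fun x => rfl
  have hv0 : fCoeff f ∅ = (∑ x : Fin n → Bool, f x) / N := by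
    simp [fCoeff, unifExp, hN]
  have hvi : ∀ i : Fin n, fCoeff f {i} = (∑ x : Fin n → Bool, f x * pm (x i)) / N := by
    intro i; simp [fCoeff, unifExp, hN]
  have hs0 : ∑ x : Fin n → Bool, f x = N * fCoeff f ∅ := by
    rw [hv0]; field_simp
  have hsi : ∀ i : Fin n, ∑ x : Fin n → Bool, f x * pm (x i) = N * fCoeff f {i} := by
    intro i; rw [hvi i]; field_simp
  set W : ℝ := (fCoeff f ∅)^2 + ∑ i : Fin n, (fCoeff f {i})^2 with hWdef
  have hWnn : 0 ≤ W := by positivity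
  set T : ℝ := c^2 + ∑ i : Fin n, (a i)^2 with hT
  have hTnn : 0 ≤ T := by positivity
  set b : (Fin n → Bool) → ℝ := fun x => |L x| with hb
  have hA2 : ∑ x : Fin n → Bool, (L x)^2 = N * T := momA c a
  have hA4 : ∑ x : Fin n → Bool, (L x)^4 ≤ 3 * N * T^2 := momB c a
  -- A1 = N * (c * v0 + ∑ a i * v i)
  have hptws : ∀ x, f x * L x = f x * c + ∑ i : Fin n, a i * (f x * pm (x i)) := by
    intro x
    rw [hLdef, mul_add, Finset.mul_sum]
    congr 1
    exact Finset.sum_congr rfl fun i _ => by ring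
  have hA1 : ∑ x : Fin n → Bool, b x
      = N * (c * fCoeff f ∅ + ∑ i : Fin n, a i * fCoeff f {i}) := by
    have h1 : ∑ x : Fin n → Bool, b x = ∑ x : Fin n → Bool, f x * L x :=
      Finset.sum_congr rfl fun x _ => by rw [hb, hfL x, sgn_mul_self]
    rw [h1, Finset.sum_congr rfl fun x _ => hptws x, Finset.sum_add_distrib, Finset.sum_comm]
    rw [← Finset.sum_mul, hs0]
    have h2 : ∀ i : Fin n, ∑ x : Fin n → Bool, a i * (f x * pm (x i)) = a i * (N * fCoeff f {i}) := by
      intro i; rw [← Finset.mul_sum, hsi i]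
    rw [Finset.sum_congr rfl fun i _ => h2 i,
      Finset.sum_congr rfl fun (i : Fin n) _ =>
        show a i * (N * fCoeff f {i}) = N * (a i * fCoeff f {i}) by ring,
      ← Finset.mul_sum]
    ring
  -- Cauchy-Schwarz on weights
  set vv : Fin (n+1) → ℝ := Fin.cons (fCoeff f ∅) (fun i => fCoeff f {i}) with hvv
  have hcs := Finset.sum_mul_sq_le_sq_mul_sq Finset.univ w vv
  have hvv1 : ∑ j : Fin (n+1), w j * vv j = c * fCoeff f ∅ + ∑ i : Fin n, a i * fCoeff f {i} := by
    rw [Fin.sum_univ_succ]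
    simp [hvv, hc, ha]
  have hvv2 : ∑ j : Fin (n+1), (w j)^2 = T := by
    rw [Fin.sum_univ_succ, hT, hc, ha]
  have hvv3 : ∑ j : Fin (n+1), (vv j)^2 = W := by
    rw [Fin.sum_univ_succ, hWdef]
    simp [hvv]
  rw [hvv1, hvv2, hvv3] at hcs
  -- Hoelder
  have hbnn : ∀ x, 0 ≤ b x := fun x => abs_nonneg _
  have cs1 : (∑ x : Fin n → Bool, (b x)^2)^2
      ≤ (∑ x : Fin n → Bool, b x) * (∑ x : Fin n → Bool, (b x)^3) := by
    have e1 : ∀ x : Fin n → Bool, Real.sqrt (b x) * (Real.sqrt (b x) * b x) = (b x)^2 := fun x => by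
      rw [← mul_assoc, Real.mul_self_sqrt (hbnn x)]; ring
    have e2 : ∀ x : Fin n → Bool, (Real.sqrt (b x))^2 = b x := fun x => Real.sq_sqrt (hbnn x)
    have e3 : ∀ x : Fin n → Bool, (Real.sqrt (b x) * b x)^2 = (b x)^3 := fun x => by
      rw [mul_pow, Real.sq_sqrt (hbnn x)]; ring
    have := Finset.sum_mul_sq_le_sq_mul_sq Finset.univ
      (fun x => Real.sqrt (b x)) (fun x => Real.sqrt (b x) * b x)
    simpa only [e1, e2, e3] using this
  have cs2 : (∑ x : Fin n → Bool, (b x)^3)^2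
      ≤ (∑ x : Fin n → Bool, (b x)^2) * (∑ x : Fin n → Bool, (b x)^4) := by
    have e1 : ∀ x : Fin n → Bool, b x * (b x)^2 = (b x)^3 := fun x => by ring
    have e2 : ∀ x : Fin n → Bool, ((b x)^2)^2 = (b x)^4 := fun x => by ring
    have := Finset.sum_mul_sq_le_sq_mul_sq Finset.univ (fun x => b x) (fun x => (b x)^2)
    simpa only [e1, e2] using this
  have habs2 : ∑ x : Fin n → Bool, (b x)^2 = ∑ x : Fin n → Bool, (L x)^2 :=
    Finset.sum_congr rfl fun x _ => by rw [hb, sq_abs]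
  have habs4 : ∑ x : Fin n → Bool, (b x)^4 = ∑ x : Fin n → Bool, (L x)^4 :=
    Finset.sum_congr rfl fun x _ => by
      rw [hb, show (4:ℕ) = 2*2 from rfl, pow_mul, sq_abs, ← pow_mul]
  rw [habs2] at cs2
  rw [habs4] at cs2
  rw [habs2] at cs1
  -- case on T
  rcases eq_or_lt_of_le hTnn with hT0 | hTpos
  · -- T = 0 : all weights vanish, f ≡ -1
    have hSnn : (0:ℝ) ≤ ∑ i : Fin n, (a i)^2 :=
      Finset.sum_nonneg fun i _ => sq_nonneg _
    have hTz : c^2 + ∑ i : Fin n, (a i)^2 = 0 := by rw [← hT, ← hT0]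
    have hceq : c = 0 := by
      have : c^2 = 0 := by linarith only [hTz, hSnn, sq_nonneg c]
      exact pow_eq_zero_iff (two_ne_zero) |>.mp this
    have hSz : ∑ i : Fin n, (a i)^2 = 0 := by linarith only [hTz, hSnn, sq_nonneg c]
    have haz : ∀ i : Fin n, a i = 0 := by
      intro i
      have := (Finset.sum_eq_zero_iff_of_nonneg
        (fun (i : Fin n) (_ : i ∈ Finset.univ) => sq_nonneg (a i))).mp hSz i (Finset.mem_univ i)
      exact pow_eq_zero_iff (two_ne_zero) |>.mp this
    have hL0 : ∀ x, L x = 0 := by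
      intro x
      rw [hLdef]
      simp only [hceq, haz]
      simp
    have hfm1 : ∀ x, f x = -1 := by
      intro x
      rw [hfL x, hL0 x]
      simp [sgn]
    have hvz : fCoeff f ∅ = -1 := by
      rw [hv0, Finset.sum_congr rfl fun x _ => hfm1 x, Finset.sum_const, Finset.card_univ]
      simp [hN]
    have hsnn : (0:ℝ) ≤ ∑ i : Fin n, (fCoeff f {i})^2 :=
      Finset.sum_nonneg fun i _ => sq_nonneg _
    rw [hWdef, hvz]
    norm_num
    linarith only [hsnn]
  · -- T > 0
    have hA2pos : 0 < ∑ x : Fin n → Bool, (L x)^2 := by rw [hA2]; positivity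
    have hA1nn : 0 ≤ ∑ x : Fin n → Bool, b x := Finset.sum_nonneg fun x _ => hbnn x
    have hA3nn : 0 ≤ ∑ x : Fin n → Bool, (b x)^3 :=
      Finset.sum_nonneg fun x _ => pow_nonneg (hbnn x) 3
    have hA4nn : 0 ≤ ∑ x : Fin n → Bool, (L x)^4 :=
      Finset.sum_nonneg fun x _ => by positivity
    have hA1sq : (∑ x : Fin n → Bool, b x)^2 ≤ N^2 * T * W := by
      rw [hA1]
      calc (N * (c * fCoeff f ∅ + ∑ i : Fin n, a i * fCoeff f {i}))^2
          = N^2 * (c * fCoeff f ∅ + ∑ i : Fin n, a i * fCoeff f {i})^2 := by ring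
        _ ≤ N^2 * (T * W) := mul_le_mul_of_nonneg_left hcs (sq_nonneg N)
        _ = N^2 * T * W := by ring
    exact third_from_ineqs _ _ _ _ N T W hA1nn hA3nn hA4nn hNpos hTpos hWnn hA2 cs1 cs2 hA1sq hA4

lemma exp_key {y : ℝ} (hy : 0 ≤ y) : Real.exp (-y) * (1 + y) ≤ 1 := by
  have h1 : 1 + y ≤ Real.exp y := by linarith [Real.add_one_le_exp y]
  calc Real.exp (-y) * (1 + y) ≤ Real.exp (-y) * Real.exp y :=
        mul_le_mul_of_nonneg_left h1 (Real.exp_nonneg _)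
    _ = 1 := by rw [← Real.exp_add]; simp


set_option maxHeartbeats 1000000 in
/-- the Fourier Min-Entropy–Influence conjecture holds for LTFs. -/
theorem fmei_for_ltf :
    ∃ C : ℝ, 0 < C ∧ ∀ n : ℕ, 1 ≤ n → ∀ w : Fin (n + 1) → ℝ,
      ∃ S : Finset (Fin n),
        (fCoeff (ltf n w) S) ^ 2 ≥ 2 ^ (-C * totalInfl (ltf n w)) := by
  refine ⟨100, by norm_num, ?_⟩
  intro n hn w
  set f := ltf n w with hf_def
  have hf : ∀ x, f x = 1 ∨ f x = -1 := fun x => sgn_eq _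
  set I := totalInfl f with hI
  have hI0 : 0 ≤ I := totalInfl_nonneg f
  have hP : 1 - (fCoeff f ∅)^2 ≤ I := by
    have h := poincare f hf
    have h0 : fCoeff f ∅ = unifExp n f := by simp [fCoeff]
    rw [h0]
    exact h
  have hW : 1/3 ≤ (fCoeff f ∅)^2 + ∑ i : Fin n, (fCoeff f {i})^2 := W_ge_third n w
  have hS : ∑ i : Fin n, |fCoeff f {i}| ≤ I := by
    calc ∑ i : Fin n, |fCoeff f {i}| ≤ ∑ i : Fin n, infl f i :=
          Finset.sum_le_sum fun i _ => abs_fCoeff_le_infl f hf i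
      _ = I := rfl
  have hlog2 : (0.6931471803 : ℝ) < Real.log 2 := Real.log_two_gt_d9
  have hlogpos : (0:ℝ) < Real.log 2 := by linarith
  set y : ℝ := 100 * Real.log 2 * I with hy_def
  have hy : 0 ≤ y := by positivity
  have h2 : (2:ℝ) ^ (-(100:ℝ) * I) = Real.exp (-y) := by
    rw [Real.rpow_def_of_pos (by norm_num : (0:ℝ) < 2)]
    congr 1
    rw [hy_def]
    ring
  have hek := exp_key hy
  have hepos := Real.exp_pos (-y)
  by_cases hImed : I ≤ 1/2
  · -- nearly constant case
    refine ⟨∅, ?_⟩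
    have hv : 1 - I ≤ (fCoeff f ∅)^2 := by linarith
    have hq : 1 ≤ (1 - I) * (1 + y) := by nlinarith [hlog2, hI0, hImed]
    have hle : Real.exp (-y) ≤ 1 - I := by
      have hypos : (0:ℝ) < 1 + y := by linarith
      exact le_of_mul_le_mul_right (le_trans hek hq) hypos
    rw [ge_iff_le, h2]
    linarith
  · -- I > 1/2
    push_neg at hImed
    have h9 : Real.exp (-y) ≤ 1/9 := by
      have hy9 : (9:ℝ) ≤ 1 + y := by
        rw [hy_def]
        nlinarith [hlog2, hImed]
      nlinarith [hek, hepos, hy9]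
    have hne : Nonempty (Fin n) := ⟨⟨0, hn⟩⟩
    obtain ⟨i₀, -, hmax⟩ := Finset.exists_max_image Finset.univ
      (fun i : Fin n => |fCoeff f {i}|) Finset.univ_nonempty
    by_cases hbig : 1/9 ≤ (fCoeff f ∅)^2
    · exact ⟨∅, by rw [ge_iff_le, h2]; linarith⟩
    · by_cases hbig1 : 1/9 ≤ (fCoeff f {i₀})^2
      · exact ⟨{i₀}, by rw [ge_iff_le, h2]; linarith⟩
      · push_neg at hbig hbig1
        set a1 := |fCoeff f {i₀}| with ha1
        have hsum2 : 2/9 ≤ ∑ i : Fin n, (fCoeff f {i})^2 := by linarith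
        have hbound : ∑ i : Fin n, (fCoeff f {i})^2 ≤ a1 * ∑ i : Fin n, |fCoeff f {i}| := by
          rw [Finset.mul_sum]
          refine Finset.sum_le_sum fun i _ => ?_
          calc (fCoeff f {i})^2 = |fCoeff f {i}| * |fCoeff f {i}| := by
                rw [← sq_abs]; ring
            _ ≤ a1 * |fCoeff f {i}| :=
                mul_le_mul_of_nonneg_right (hmax i (Finset.mem_univ i)) (abs_nonneg _)
        have ha1I : 2/9 ≤ a1 * I := by
          calc (2:ℝ)/9 ≤ ∑ i : Fin n, (fCoeff f {i})^2 := hsum2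
            _ ≤ a1 * ∑ i : Fin n, |fCoeff f {i}| := hbound
            _ ≤ a1 * I := mul_le_mul_of_nonneg_left hS (abs_nonneg _)
        have ha1pos : 0 < a1 := by nlinarith [hImed, ha1I]
        refine ⟨{i₀}, ?_⟩
        have hinv : a1⁻¹ ≤ 9/2 * I := by
          rw [inv_eq_one_div, div_le_iff₀ ha1pos]
          nlinarith [ha1I]
        have hlogb : -Real.log a1 ≤ 9/2 * I := by
          have h1 : Real.log (a1⁻¹) ≤ a1⁻¹ - 1 :=
            Real.log_le_sub_one_of_pos (inv_pos.mpr ha1pos)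
          rw [Real.log_inv] at h1
          linarith [hinv]
        have hmul : 9 * I ≤ 100 * Real.log 2 * I :=
          mul_le_mul_of_nonneg_right (by linarith only [hlog2] : (9:ℝ) ≤ 100 * Real.log 2) hI0
        have key : -y ≤ 2 * Real.log a1 := by
          rw [hy_def]
          linarith only [hlogb, hmul]
        have ha1sq : a1^2 = Real.exp (2 * Real.log a1) := by
          rw [show (2:ℝ) * Real.log a1 = Real.log a1 + Real.log a1 by ring, Real.exp_add,
            Real.exp_log ha1pos]
          ring
        rw [ge_iff_le, h2]
        calc Real.exp (-y) ≤ Real.exp (2 * Real.log a1) := Real.exp_le_exp.mpr key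
          _ = a1^2 := ha1sq.symm
          _ = (fCoeff f {i₀})^2 := sq_abs _
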